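/- arXiv:1708.08671 — 4 statements merged into one kernel-verified Lean document; each statement's English description precedes it below -/
import Mathlib

section
/- For all μ > 0, λ > 0 and x > 0, ∫₀ˣ (λ^{1/2}/√(2π)) z^{−3/2} E(z;μ,λ) dz = Φ(√(λ/x)·(x/μ − 1)) + exp(2λ/μ)·Φ(−√(λ/x)·(x/μ + 1)). (This is the cumulative distribution function of the inverse Gaussian distribution, i.e. the generalized inverse Gaussian distribution with p = −1/2.) -/
open MeasureTheory Real Filter Set Topology

/-- Standard normal cumulative distribution function. -/
noncomputable def stdNormalCDF (x : ℝ) : ℝ :=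
  ∫ t in Set.Iic x, (Real.sqrt (2 * Real.pi))⁻¹ * Real.exp (-t ^ 2 / 2)

/-- The exponential factor `E(z; μ, λ) = exp(−λ(z−μ)²/(2μ²z))`. -/
noncomputable def gigE (z μ lam : ℝ) : ℝ :=
  Real.exp (-(lam * (z - μ) ^ 2) / (2 * μ ^ 2 * z))

noncomputable def npdf (t : ℝ) : ℝ := (Real.sqrt (2 * Real.pi))⁻¹ * Real.exp (-t ^ 2 / 2)

lemma npdf_integrable : Integrable npdf := by
  have h := (integrable_exp_neg_mul_sq (b := (1/2:ℝ)) (by norm_num)).const_mul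
    (Real.sqrt (2 * Real.pi))⁻¹
  convert h using 2 with t
  unfold npdf
  ring_nf

lemma npdf_continuous : Continuous npdf := by
  unfold npdf; fun_prop

lemma stdNormalCDF_nonneg (y : ℝ) : 0 ≤ stdNormalCDF y := by
  apply integral_nonneg
  intro t
  positivity

lemma hasDerivAt_stdNormalCDF (t : ℝ) : HasDerivAt stdNormalCDF (npdf t) t := by
  have hre : ∀ y : ℝ, stdNormalCDF y = stdNormalCDF 0 + ∫ s in (0:ℝ)..y, npdf s := by
    intro y
    have := intervalIntegral.integral_Iic_sub_Iic
      (npdf_integrable.integrableOn (s := Set.Iic (0:ℝ)))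
      (npdf_integrable.integrableOn (s := Set.Iic y))
    unfold stdNormalCDF npdf at *
    linarith [this]
  have hd : HasDerivAt (fun y => stdNormalCDF 0 + ∫ s in (0:ℝ)..y, npdf s) (npdf t) t := by
    apply HasDerivAt.const_add
    exact intervalIntegral.integral_hasDerivAt_right
      npdf_integrable.intervalIntegrable
      (npdf_continuous.stronglyMeasurableAtFilter _ _)
      npdf_continuous.continuousAt
  exact hd.congr_of_eventuallyEq (Filter.Eventually.of_forall fun y => hre y)

lemma stdNormalCDF_tendsto_atBot : Tendsto stdNormalCDF atBot (𝓝 0) := by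
  have hub : ∀ y : ℝ, y ≤ -2 → stdNormalCDF y ≤ (Real.sqrt (2 * Real.pi))⁻¹ * Real.exp y := by
    intro y hy
    have h1 : stdNormalCDF y ≤ ∫ t in Set.Iic y, (Real.sqrt (2 * Real.pi))⁻¹ * Real.exp t := by
      apply setIntegral_mono_on
      · exact npdf_integrable.integrableOn
      · exact ((integrableOn_exp_Iic y).const_mul _)
      · exact measurableSet_Iic
      · intro t ht
        simp only [Set.mem_Iic] at ht
        have ht2 : t ≤ -2 := ht.trans hy
        apply mul_le_mul_of_nonneg_left _ (by positivity)
        apply Real.exp_le_exp.2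
        nlinarith
    have h2 : ∫ t in Set.Iic y, (Real.sqrt (2 * Real.pi))⁻¹ * Real.exp t
        = (Real.sqrt (2 * Real.pi))⁻¹ * Real.exp y := by
      rw [integral_const_mul, integral_exp_Iic]
    linarith
  have hto : Tendsto (fun y : ℝ => (Real.sqrt (2 * Real.pi))⁻¹ * Real.exp y) atBot (𝓝 0) := by
    simpa using (Real.tendsto_exp_atBot).const_mul (Real.sqrt (2 * Real.pi))⁻¹
  apply tendsto_of_tendsto_of_tendsto_of_le_of_le' tendsto_const_nhds hto
  · exact Filter.Eventually.of_forall fun y => stdNormalCDF_nonneg y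
  · exact (eventually_le_atBot (-2)).mono hub

lemma gig_hasDerivAt (μ lam : ℝ) (hμ : 0 < μ) (hlam : 0 < lam) {t : ℝ} (ht : 0 < t) :
    HasDerivAt (fun z => stdNormalCDF (Real.sqrt (lam / z) * (z / μ - 1))
        + Real.exp (2 * lam / μ) * stdNormalCDF (-(Real.sqrt (lam / z)) * (z / μ + 1)))
      (Real.sqrt lam / Real.sqrt (2 * Real.pi) * t ^ (-(3:ℝ)/2) * gigE t μ lam) t := by
  set l := Real.sqrt lam with hl
  have hl2 : l ^ 2 = lam := Real.sq_sqrt hlam.le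
  have hlpos : 0 < l := Real.sqrt_pos.mpr hlam
  have hspos : 0 < Real.sqrt t := Real.sqrt_pos.mpr ht
  have hsne : Real.sqrt t ≠ 0 := hspos.ne'
  have hts : Real.sqrt t ^ 2 = t := Real.sq_sqrt ht.le
  have h2pi : Real.sqrt (2 * Real.pi) ≠ 0 := by positivity
  -- derivatives of the inner functions
  have hsq : HasDerivAt Real.sqrt (1 / (2 * Real.sqrt t)) t := Real.hasDerivAt_sqrt ht.ne'
  have hinv : HasDerivAt (fun z => (Real.sqrt z)⁻¹)
      (-(1 / (2 * Real.sqrt t)) / (Real.sqrt t) ^ 2) t := hsq.inv hsne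
  have hA : HasDerivAt (fun z => l * (Real.sqrt z / μ - (Real.sqrt z)⁻¹))
      (l * (1 / (2 * Real.sqrt t) / μ - -(1 / (2 * Real.sqrt t)) / (Real.sqrt t) ^ 2)) t :=
    ((hsq.div_const μ).sub hinv).const_mul l
  have hB : HasDerivAt (fun z => l * (-Real.sqrt z / μ - (Real.sqrt z)⁻¹))
      (l * (-(1 / (2 * Real.sqrt t)) / μ - -(1 / (2 * Real.sqrt t)) / (Real.sqrt t) ^ 2)) t :=
    (((hsq.neg).div_const μ).sub hinv).const_mul l
  have h1 : HasDerivAt (fun z => stdNormalCDF (l * (Real.sqrt z / μ - (Real.sqrt z)⁻¹)))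
      (npdf (l * (Real.sqrt t / μ - (Real.sqrt t)⁻¹))
        * (l * (1 / (2 * Real.sqrt t) / μ - -(1 / (2 * Real.sqrt t)) / (Real.sqrt t) ^ 2))) t :=
    (hasDerivAt_stdNormalCDF _).comp t hA
  have h2 : HasDerivAt (fun z => Real.exp (2 * lam / μ)
        * stdNormalCDF (l * (-Real.sqrt z / μ - (Real.sqrt z)⁻¹)))
      (Real.exp (2 * lam / μ) * (npdf (l * (-Real.sqrt t / μ - (Real.sqrt t)⁻¹))
        * (l * (-(1 / (2 * Real.sqrt t)) / μ - -(1 / (2 * Real.sqrt t)) / (Real.sqrt t) ^ 2)))) t :=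
    ((hasDerivAt_stdNormalCDF _).comp t hB).const_mul _
  have hG := h1.add h2
  have heq : (fun z => stdNormalCDF (Real.sqrt (lam / z) * (z / μ - 1))
        + Real.exp (2 * lam / μ) * stdNormalCDF (-(Real.sqrt (lam / z)) * (z / μ + 1)))
      =ᶠ[𝓝 t] (fun z => stdNormalCDF (l * (Real.sqrt z / μ - (Real.sqrt z)⁻¹))
        + Real.exp (2 * lam / μ) * stdNormalCDF (l * (-Real.sqrt z / μ - (Real.sqrt z)⁻¹))) := by
    filter_upwards [Ioi_mem_nhds ht] with z hz
    have hzs : Real.sqrt z * Real.sqrt z = z := Real.mul_self_sqrt (le_of_lt hz)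
    have hzsne : Real.sqrt z ≠ 0 := (Real.sqrt_pos.mpr hz).ne'
    have hdiv : Real.sqrt (lam / z) = l / Real.sqrt z := Real.sqrt_div hlam.le z
    have e1 : Real.sqrt (lam / z) * (z / μ - 1) = l * (Real.sqrt z / μ - (Real.sqrt z)⁻¹) := by
      rw [hdiv]
      field_simp
      linear_combination (-1) * hzs
    have e2 : -(Real.sqrt (lam / z)) * (z / μ + 1) = l * (-Real.sqrt z / μ - (Real.sqrt z)⁻¹) := by
      rw [hdiv]
      field_simp
      linear_combination hzs
    rw [e1, e2]
  have hfinal := hG.congr_of_eventuallyEq heq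
  convert hfinal using 1
  case e'_4 => rfl
  case e'_5 => rfl
  -- now prove the derivative values agree
  have ht32 : t ^ (-(3:ℝ)/2) = (t * Real.sqrt t)⁻¹ := by
    rw [show (-(3:ℝ)/2) = -(1 + 1/2) by norm_num, Real.rpow_neg ht.le, Real.rpow_add ht,
      Real.rpow_one, ← Real.sqrt_eq_rpow]
  have hc : Real.exp (2 * lam / μ) * npdf (l * (-Real.sqrt t / μ - (Real.sqrt t)⁻¹))
      = npdf (l * (Real.sqrt t / μ - (Real.sqrt t)⁻¹)) := by
    unfold npdf
    rw [← mul_assoc, mul_comm (Real.exp (2 * lam / μ)), mul_assoc, ← Real.exp_add]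
    congr 2
    rw [← hl2]
    field_simp
    ring_nf
  have hg12 : npdf (l * (Real.sqrt t / μ - (Real.sqrt t)⁻¹))
      = (Real.sqrt (2 * Real.pi))⁻¹ * gigE t μ lam := by
    unfold npdf gigE
    congr 2
    rw [← hl2]
    field_simp
    ring_nf
    linear_combination (μ^2 - t*Real.sqrt t^2) * hts
  rw [ht32, ← mul_assoc (Real.exp (2 * lam / μ)), hc, ← mul_add, hg12]
  field_simp
  ring_nf
  rw [hts]
  ring

set_option maxHeartbeats 1000000 in
/-- C.d.f. of the inverse Gaussian distribution (generalized inverse Gaussian with `p = −1/2`). -/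
theorem gig_cdf_neg_half (μ lam x : ℝ) (hμ : 0 < μ) (hlam : 0 < lam) (hx : 0 < x) :
    (∫ z in (0:ℝ)..x,
        Real.sqrt lam / Real.sqrt (2 * Real.pi) * z ^ (-(3:ℝ)/2) * gigE z μ lam)
      = stdNormalCDF (Real.sqrt (lam / x) * (x / μ - 1))
        + Real.exp (2 * lam / μ) * stdNormalCDF (-(Real.sqrt (lam / x)) * (x / μ + 1)) := by
  set f : ℝ → ℝ := fun z =>
    Real.sqrt lam / Real.sqrt (2 * Real.pi) * z ^ (-(3:ℝ)/2) * gigE z μ lam with hf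
  set F : ℝ → ℝ := fun z => stdNormalCDF (Real.sqrt (lam / z) * (z / μ - 1))
      + Real.exp (2 * lam / μ) * stdNormalCDF (-(Real.sqrt (lam / z)) * (z / μ + 1)) with hF
  have hderiv : ∀ t : ℝ, 0 < t → HasDerivAt F (f t) t :=
    fun t ht => gig_hasDerivAt μ lam hμ hlam ht
  have hFnonneg : ∀ z, 0 ≤ F z := fun z =>
    add_nonneg (stdNormalCDF_nonneg _) (mul_nonneg (Real.exp_pos _).le (stdNormalCDF_nonneg _))
  have hfnonneg : ∀ z : ℝ, 0 < z → 0 ≤ f z := by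
    intro z hz
    simp only [hf]
    unfold gigE
    positivity
  have hcont : ∀ t : ℝ, 0 < t → ContinuousAt f t := by
    intro t ht
    simp only [hf]
    apply ContinuousAt.mul
    · exact continuousAt_const.mul (Real.continuousAt_rpow_const _ _ (Or.inl ht.ne'))
    · unfold gigE
      apply Real.continuous_exp.continuousAt.comp
      apply ContinuousAt.div
      · fun_prop
      · fun_prop
      · positivity
  have hstep : ∀ ε : ℝ, 0 < ε → ε ≤ x → ∫ z in ε..x, f z = F x - F ε := by
    intro ε hε hεx
    apply intervalIntegral.integral_eq_sub_of_hasDerivAt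
    · intro t htmem
      rw [Set.uIcc_of_le hεx] at htmem
      exact hderiv t (lt_of_lt_of_le hε htmem.1)
    · apply ContinuousOn.intervalIntegrable
      intro t htm
      rw [Set.uIcc_of_le hεx] at htm
      exact (hcont t (lt_of_lt_of_le hε htm.1)).continuousWithinAt
  -- the approximating sequence
  set a : ℕ → ℝ := fun n => x / (n + 1) with ha
  have ha_pos : ∀ n : ℕ, 0 < a n := fun n => by positivity
  have ha_le : ∀ n : ℕ, a n ≤ x := fun n => by
    apply div_le_self hx.le
    simp
  have ha_anti : Antitone a := by
    intro m n hmn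
    apply div_le_div_of_nonneg_left hx.le (by positivity)
    exact_mod_cast by omega
  have ha_tend : Tendsto a atTop (𝓝 0) := by
    have h1 : Tendsto (fun n : ℕ => ((n : ℝ) + 1)) atTop atTop :=
      tendsto_natCast_atTop_atTop.atTop_add tendsto_const_nhds
    simpa [ha, div_eq_mul_inv] using (h1.inv_tendsto_atTop).const_mul x
  have hione : ∀ n, IntegrableOn f (Set.Ioc (a n) x) := by
    intro n
    have hco : ContinuousOn f (Set.Icc (a n) x) := fun t htm =>
      (hcont t (lt_of_lt_of_le (ha_pos n) htm.1)).continuousWithinAt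
    exact hco.integrableOn_Icc.mono_set Set.Ioc_subset_Icc_self
  have hnormint : ∀ n, (∫ z in Set.Ioc (a n) x, ‖f z‖) ≤ F x := by
    intro n
    have h1 : ∀ z ∈ Set.Ioc (a n) x, ‖f z‖ = f z := fun z hz =>
      Real.norm_of_nonneg (hfnonneg z ((ha_pos n).trans hz.1))
    rw [setIntegral_congr_fun measurableSet_Ioc h1,
      ← intervalIntegral.integral_of_le (ha_le n), hstep (a n) (ha_pos n) (ha_le n)]
    linarith [hFnonneg (a n)]
  have hint : IntegrableOn f (Set.Ioc 0 x) :=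
    integrableOn_Ioc_of_intervalIntegral_norm_bounded_left hione ha_tend
      (Filter.Eventually.of_forall hnormint)
  -- limits of F along the sequence
  have ha_tend' : Tendsto a atTop (𝓝[>] 0) :=
    tendsto_nhdsWithin_of_tendsto_nhds_of_eventually_within a ha_tend
      (Filter.Eventually.of_forall ha_pos)
  have hsqrtTop : Tendsto (fun n => Real.sqrt (lam / a n)) atTop atTop := by
    have hinvTop : Tendsto (fun n => (a n)⁻¹) atTop atTop :=
      tendsto_inv_nhdsGT_zero.comp ha_tend'
    have hdivTop : Tendsto (fun n => lam / a n) atTop atTop := by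
      simpa [div_eq_mul_inv] using hinvTop.const_mul_atTop hlam
    have hsq : Tendsto Real.sqrt atTop atTop := by
      rw [show Real.sqrt = fun x : ℝ => x ^ (1/2 : ℝ) from funext fun x => Real.sqrt_eq_rpow x]
      exact tendsto_rpow_atTop (by norm_num : (0:ℝ) < 1/2)
    exact hsq.comp hdivTop
  have harg1 : Tendsto (fun n => Real.sqrt (lam / a n) * (a n / μ - 1)) atTop atBot := by
    apply Tendsto.atTop_mul_neg (show (-1:ℝ) < 0 by norm_num) hsqrtTop
    have := (ha_tend.div_const μ).sub_const 1
    simpa using this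
  have harg2 : Tendsto (fun n => -(Real.sqrt (lam / a n)) * (a n / μ + 1)) atTop atBot := by
    have h2 : Tendsto (fun n => Real.sqrt (lam / a n) * (-(a n / μ + 1))) atTop atBot := by
      apply Tendsto.atTop_mul_neg (show (-1:ℝ) < 0 by norm_num) hsqrtTop
      have := ((ha_tend.div_const μ).add_const 1).neg
      simpa using this
    convert h2 using 2 with n
    ring
  have hFlim : Tendsto (fun n => F (a n)) atTop (𝓝 0) := by
    have l1 := stdNormalCDF_tendsto_atBot.comp harg1
    have l2 := stdNormalCDF_tendsto_atBot.comp harg2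
    have := l1.add ((l2.const_mul (Real.exp (2 * lam / μ))))
    simpa [hF, Function.comp] using this
  -- two limits of the same sequence of integrals
  have t1 : Tendsto (fun n => ∫ z in (a n)..x, f z) atTop (𝓝 (F x - 0)) := by
    have : (fun n => ∫ z in (a n)..x, f z) = fun n => F x - F (a n) := by
      funext n; exact hstep (a n) (ha_pos n) (ha_le n)
    rw [this]
    exact tendsto_const_nhds.sub hFlim
  have hunion : (⋃ n, Set.Ioc (a n) x) = Set.Ioc 0 x := by
    ext z
    simp only [Set.mem_iUnion, Set.mem_Ioc]
    constructor
    · rintro ⟨n, h1, h2⟩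
      exact ⟨(ha_pos n).trans h1, h2⟩
    · rintro ⟨h1, h2⟩
      obtain ⟨n, hn⟩ := (ha_tend.eventually_lt_const h1).exists
      exact ⟨n, hn, h2⟩
  have hmono : Monotone fun n => Set.Ioc (a n) x := fun m n hmn =>
    Set.Ioc_subset_Ioc_left (ha_anti hmn)
  have t2 : Tendsto (fun n => ∫ z in (a n)..x, f z) atTop (𝓝 (∫ z in Set.Ioc 0 x, f z)) := by
    have := tendsto_setIntegral_of_monotone (fun n => measurableSet_Ioc) hmono
      (hunion ▸ hint)
    rw [hunion] at this
    have heq2 : (fun n => ∫ z in (a n)..x, f z) = fun n => ∫ z in Set.Ioc (a n) x, f z := by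
      funext n; exact intervalIntegral.integral_of_le (ha_le n)
    rw [heq2]
    exact this
  have hkey : F x - 0 = ∫ z in Set.Ioc 0 x, f z := tendsto_nhds_unique t1 t2
  show (∫ z in (0:ℝ)..x, f z) = F x
  rw [intervalIntegral.integral_of_le hx.le]
  linarith
end

section
/- For every c > 0 (including c = 1/M), I_M := ∫₀^{X−1} (1+x)^{−1} φ_{cM(1+x), c²D²(1+x)/(u+cv)}(x) dx = [Φ(A(x)) + exp(2λ(1−cM)) · Φ(B(x))] evaluated from x = 1 to x = X, i.e. equals (Φ(A(X)) + e^{2λ(1−cM)}Φ(B(X))) − (Φ(A(1)) + e^{2λ(1−cM)}Φ(B(1))). -/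
open MeasureTheory Real

/-- P.d.f. of the normal distribution with mean `m` and variance `s2`. -/
noncomputable def normalPdf (m s2 x : ℝ) : ℝ :=
  (Real.sqrt (2 * Real.pi * s2))⁻¹ * Real.exp (-(x - m) ^ 2 / (2 * s2))

/-- `A(x) = (√(u+cv)/(cD√x))·(x(1−cM) − 1)`. -/
noncomputable def Afun (u c v M D x : ℝ) : ℝ :=
  Real.sqrt (u + c * v) / (c * D * Real.sqrt x) * (x * (1 - c * M) - 1)

/-- `B(x) = −(√(u+cv)/(cD√x))·(1 + x(1−cM))`. -/
noncomputable def Bfun (u c v M D x : ℝ) : ℝ :=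
  -(Real.sqrt (u + c * v) / (c * D * Real.sqrt x)) * (1 + x * (1 - c * M))

lemma gauss_integrable :
    Integrable (fun t : ℝ => (Real.sqrt (2 * Real.pi))⁻¹ * Real.exp (-t ^ 2 / 2)) := by
  have h : Integrable (fun t : ℝ => Real.exp (-(1/2 : ℝ) * t ^ 2)) :=
    integrable_exp_neg_mul_sq (by norm_num)
  have := h.const_mul (Real.sqrt (2 * Real.pi))⁻¹
  refine this.congr (Filter.Eventually.of_forall fun t => ?_)
  ring_nf

lemma gauss_continuous :
    Continuous (fun t : ℝ => (Real.sqrt (2 * Real.pi))⁻¹ * Real.exp (-t ^ 2 / 2)) := by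
  continuity

lemma hasDerivAt_stdNormalCDF_s8 (y : ℝ) :
    HasDerivAt stdNormalCDF ((Real.sqrt (2 * Real.pi))⁻¹ * Real.exp (-y ^ 2 / 2)) y := by
  set f : ℝ → ℝ := fun t => (Real.sqrt (2 * Real.pi))⁻¹ * Real.exp (-t ^ 2 / 2) with hf
  have hint := gauss_integrable
  have hcont := gauss_continuous
  have h1 : ∀ x : ℝ, stdNormalCDF x = (∫ t in Set.Iic 0, f t) + ∫ t in (0:ℝ)..x, f t := by
    intro x
    rw [← intervalIntegral.integral_Iic_sub_Iic hint.integrableOn hint.integrableOn]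
    unfold stdNormalCDF
    ring
  have h2 : HasDerivAt (fun x : ℝ => ∫ t in (0:ℝ)..x, f t) (f y) y :=
    intervalIntegral.integral_hasDerivAt_right hint.intervalIntegrable
      hcont.aestronglyMeasurable.stronglyMeasurableAtFilter hcont.continuousAt
  have h3 := h2.const_add (∫ t in Set.Iic 0, f t)
  exact h3.congr_of_eventuallyEq (Filter.Eventually.of_forall h1)

lemma hasDerivAt_main (u c v M D : ℝ) (hu : 0 < u) (hc : 0 < c) (hv : 0 ≤ v) (hD : 0 < D)
    (x : ℝ) (hx : 0 ≤ x) :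
    HasDerivAt (fun y => stdNormalCDF (Afun u c v M D (y + 1))
        + Real.exp (2 * ((u + c * v) / (c ^ 2 * D ^ 2)) * (1 - c * M))
            * stdNormalCDF (Bfun u c v M D (y + 1)))
      ((1 + x)⁻¹ * normalPdf (c * M * (1 + x)) (c ^ 2 * D ^ 2 * (1 + x) / (u + c * v)) x) x := by
  have hU : 0 < u + c * v := by positivity
  have hs : (0:ℝ) < x + 1 := by linarith
  have hw : Real.sqrt (x + 1) > 0 := Real.sqrt_pos.2 hs
  have hq : Real.sqrt (u + c * v) > 0 := Real.sqrt_pos.2 hU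
  have hw2 : Real.sqrt (x + 1) ^ 2 = x + 1 := Real.sq_sqrt hs.le
  have hq2 : Real.sqrt (u + c * v) ^ 2 = u + c * v := Real.sq_sqrt hU.le
  set w := Real.sqrt (x + 1) with hwdef
  set q := Real.sqrt (u + c * v) with hqdef
  -- derivative of sqrt(y+1)
  have hsqrt : HasDerivAt (fun y : ℝ => Real.sqrt (y + 1)) (1 / (2 * w)) x := by
    have := (Real.hasDerivAt_sqrt (ne_of_gt hs)).comp x ((hasDerivAt_id x).add_const 1)
    exact this.congr_deriv (mul_one _)
  have hden : HasDerivAt (fun y : ℝ => c * D * Real.sqrt (y + 1)) (c * D * (1 / (2 * w))) x :=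
    hsqrt.const_mul _
  have hdenne : c * D * w ≠ 0 := by positivity
  have hfrac : HasDerivAt (fun y : ℝ => q / (c * D * Real.sqrt (y + 1)))
      ((0 * (c * D * w) - q * (c * D * (1 / (2 * w)))) / (c * D * w) ^ 2) x :=
    (hasDerivAt_const x q).div hden hdenne
  have hlinA : HasDerivAt (fun y : ℝ => (y + 1) * (1 - c * M) - 1) (1 - c * M) x := by
    simpa using (((hasDerivAt_id x).add_const 1).mul_const (1 - c * M)).sub_const 1
  have hlinB : HasDerivAt (fun y : ℝ => 1 + (y + 1) * (1 - c * M)) (1 - c * M) x := by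
    simpa using (((hasDerivAt_id x).add_const 1).mul_const (1 - c * M)).const_add 1
  have hA : HasDerivAt (fun y => Afun u c v M D (y + 1))
      (q * ((x + 1) * (1 - c * M) + 1) / (2 * c * D * (x + 1) * w)) x := by
    have := hfrac.mul hlinA
    unfold Afun
    refine this.congr_deriv ?_
    symm
    rw [← hwdef, ← hw2]
    field_simp
    ring
  have hB : HasDerivAt (fun y => Bfun u c v M D (y + 1))
      (q * (1 - (x + 1) * (1 - c * M)) / (2 * c * D * (x + 1) * w)) x := by
    have := hfrac.neg.mul hlinB
    unfold Bfun
    refine this.congr_deriv ?_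
    symm
    simp only [Pi.neg_apply]
    rw [← hwdef, ← hw2]
    field_simp
    ring
  have hPA := (hasDerivAt_stdNormalCDF_s8 (Afun u c v M D (x + 1))).comp x hA
  have hPB := ((hasDerivAt_stdNormalCDF_s8 (Bfun u c v M D (x + 1))).comp x hB).const_mul
      (Real.exp (2 * ((u + c * v) / (c ^ 2 * D ^ 2)) * (1 - c * M)))
  have htot := hPA.add hPB
  refine htot.congr_deriv ?_
  symm
  -- key exponential identity
  have key : Real.exp (2 * ((u + c * v) / (c ^ 2 * D ^ 2)) * (1 - c * M))
      * Real.exp (-(Bfun u c v M D (x + 1)) ^ 2 / 2)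
      = Real.exp (-(Afun u c v M D (x + 1)) ^ 2 / 2) := by
    rw [← Real.exp_add]
    congr 1
    unfold Afun Bfun
    rw [← hwdef, ← hqdef, ← hw2, ← hq2]
    field_simp
    ring
  have hE2 : -(x - c * M * (1 + x)) ^ 2 / (2 * (c ^ 2 * D ^ 2 * (1 + x) / (u + c * v)))
      = -(Afun u c v M D (x + 1)) ^ 2 / 2 := by
    unfold Afun
    rw [show (1:ℝ) + x = x + 1 by ring, ← hwdef, ← hqdef, ← hw2, ← hq2,
      show x = w ^ 2 - 1 by rw [hw2]; ring]
    field_simp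
    ring
  have hsq2pi : Real.sqrt (2 * Real.pi * (c ^ 2 * D ^ 2 * (1 + x) / (u + c * v)))
      = Real.sqrt (2 * Real.pi) * (c * D * w) / q := by
    rw [show 2 * Real.pi * (c ^ 2 * D ^ 2 * (1 + x) / (u + c * v))
        = (Real.sqrt (2 * Real.pi) * (c * D * w) / q) ^ 2 by
      rw [div_pow, mul_pow, mul_pow, Real.sq_sqrt (by positivity), hw2, hq2]
      field_simp
      ring]
    exact Real.sqrt_sq (by positivity)
  unfold normalPdf
  rw [hE2, hsq2pi]
  rw [show Real.exp (2 * ((u + c * v) / (c ^ 2 * D ^ 2)) * (1 - c * M))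
      * ((Real.sqrt (2 * Real.pi))⁻¹ * Real.exp (-(Bfun u c v M D (x + 1)) ^ 2 / 2)
        * (q * (1 - (x + 1) * (1 - c * M)) / (2 * c * D * (x + 1) * w)))
      = (Real.sqrt (2 * Real.pi))⁻¹ * Real.exp (-(Afun u c v M D (x + 1)) ^ 2 / 2)
        * (q * (1 - (x + 1) * (1 - c * M)) / (2 * c * D * (x + 1) * w)) by
    rw [← key]; ring]
  have h2pi : Real.sqrt (2 * Real.pi) > 0 := Real.sqrt_pos.2 (by positivity)
  rw [show (1:ℝ) + x = x + 1 by ring, ← hw2]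
  field_simp
  ring

/-- Explicit expression for `I_M` for every `c > 0`. -/
theorem IM_eq (u c v t M D : ℝ)
    (hu : 0 < u) (hc : 0 < c) (hv : 0 ≤ v) (ht : v < t) (hM : 0 < M) (hD : 0 < D) :
    (∫ x in (0:ℝ)..(c * (t - v) / (u + c * v)),
        (1 + x)⁻¹ *
          normalPdf (c * M * (1 + x)) (c ^ 2 * D ^ 2 * (1 + x) / (u + c * v)) x)
      = (stdNormalCDF (Afun u c v M D (c * (t - v) / (u + c * v) + 1))
            + Real.exp (2 * ((u + c * v) / (c ^ 2 * D ^ 2)) * (1 - c * M))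
                * stdNormalCDF (Bfun u c v M D (c * (t - v) / (u + c * v) + 1)))
        - (stdNormalCDF (Afun u c v M D 1)
            + Real.exp (2 * ((u + c * v) / (c ^ 2 * D ^ 2)) * (1 - c * M))
                * stdNormalCDF (Bfun u c v M D 1)) := by
  have hU : 0 < u + c * v := by positivity
  set b := c * (t - v) / (u + c * v) with hbdef
  have hb0 : 0 ≤ b := by
    have : 0 < t - v := by linarith
    positivity
  have huIcc : Set.uIcc (0:ℝ) b = Set.Icc 0 b := Set.uIcc_of_le hb0
  have hderiv : ∀ x ∈ Set.uIcc (0:ℝ) b,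
      HasDerivAt (fun y => stdNormalCDF (Afun u c v M D (y + 1))
        + Real.exp (2 * ((u + c * v) / (c ^ 2 * D ^ 2)) * (1 - c * M))
            * stdNormalCDF (Bfun u c v M D (y + 1)))
      ((1 + x)⁻¹ * normalPdf (c * M * (1 + x)) (c ^ 2 * D ^ 2 * (1 + x) / (u + c * v)) x) x := by
    intro x hx
    rw [huIcc] at hx
    exact hasDerivAt_main u c v M D hu hc hv hD x hx.1
  have hcontOn : ContinuousOn (fun x : ℝ => (1 + x)⁻¹ *
      normalPdf (c * M * (1 + x)) (c ^ 2 * D ^ 2 * (1 + x) / (u + c * v)) x)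
      (Set.uIcc (0:ℝ) b) := by
    rw [huIcc]
    have h1 : ∀ x ∈ Set.Icc (0:ℝ) b, (1:ℝ) + x ≠ 0 := fun x hx => by nlinarith [hx.1]
    unfold normalPdf
    apply ContinuousOn.mul
    · exact ((continuous_const.add continuous_id).continuousOn).inv₀ h1
    apply ContinuousOn.mul
    · apply ContinuousOn.inv₀
      · fun_prop
      · intro x hx
        have h1x : (0:ℝ) < 1 + x := by nlinarith [hx.1]
        have : (0:ℝ) < 2 * Real.pi * (c ^ 2 * D ^ 2 * (1 + x) / (u + c * v)) := by positivity
        exact ne_of_gt (Real.sqrt_pos.2 this)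
    · apply Real.continuous_exp.comp_continuousOn
      apply ContinuousOn.div
      · fun_prop
      · fun_prop
      · intro x hx
        have h1x : (0:ℝ) < 1 + x := by nlinarith [hx.1]
        have : (0:ℝ) < 2 * (c ^ 2 * D ^ 2 * (1 + x) / (u + c * v)) := by positivity
        exact ne_of_gt this
  have hint : IntervalIntegrable (fun x : ℝ => (1 + x)⁻¹ *
      normalPdf (c * M * (1 + x)) (c ^ 2 * D ^ 2 * (1 + x) / (u + c * v)) x) volume 0 b :=
    hcontOn.intervalIntegrable
  have hFTC := intervalIntegral.integral_eq_sub_of_hasDerivAt hderiv hint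
  rw [hFTC]
  norm_num
end

section
/- At the critical point c = c* = 1/M one has I_M^t(u,c*,v) = 2·[Φ(√(u+c*v)/(c*D)) − Φ(√(u+c*v)/(c*D·√X))] with X = c*(t−v)/(u+c*v) + 1, and I_M^∞(u,c*,v) = 2·Φ(√(u+c*v)/(c*D)) − 1. Moreover, for v = 0, lim_{c→0⁺} I_M^t(u,c,0) = Φ((t − Mu)/(D√u)) − Φ(−(M/D)√u) and lim_{c→0⁺} I_M^∞(u,c,0) = Φ((M/D)√u). -/
open MeasureTheory Real Filter

/-- `I_M^t(u,c,v)`. -/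
noncomputable def IMt (u c v t M D : ℝ) : ℝ :=
  ∫ x in (0:ℝ)..(c * (t - v) / (u + c * v)),
    (1 + x)⁻¹ * normalPdf (c * M * (1 + x)) (c ^ 2 * D ^ 2 * (1 + x) / (u + c * v)) x

/-- `I_M^∞(u,c,v)`. -/
noncomputable def IMinf (u c v M D : ℝ) : ℝ :=
  ∫ x in Set.Ioi (0:ℝ),
    (1 + x)⁻¹ * normalPdf (c * M * (1 + x)) (c ^ 2 * D ^ 2 * (1 + x) / (u + c * v)) x

open Set Topology


noncomputable def gauss (x : ℝ) : ℝ := (Real.sqrt (2 * Real.pi))⁻¹ * Real.exp (-x ^ 2 / 2)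

lemma gauss_cont : Continuous gauss := by
  unfold gauss; fun_prop

lemma gauss_nonneg (x : ℝ) : 0 ≤ gauss x := by
  unfold gauss; positivity

lemma gauss_integrable_s11 : Integrable gauss := by
  have h : gauss = fun x => (Real.sqrt (2 * Real.pi))⁻¹ * Real.exp (-(1/2) * x ^ 2) := by
    funext x; unfold gauss; ring_nf
  rw [h]
  exact (integrable_exp_neg_mul_sq (by norm_num : (0:ℝ) < 1/2)).const_mul _

lemma gauss_integral : ∫ x, gauss x = 1 := by
  have h : ∫ x, Real.exp (-(1/2) * x ^ 2) = Real.sqrt (2 * Real.pi) := by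
    rw [integral_gaussian, show Real.pi / (1/2) = 2 * Real.pi by ring]
  unfold gauss
  have : ∀ x : ℝ, (Real.sqrt (2 * Real.pi))⁻¹ * Real.exp (-x ^ 2 / 2)
      = (Real.sqrt (2 * Real.pi))⁻¹ * Real.exp (-(1/2) * x ^ 2) := by
    intro x; ring_nf
  simp_rw [this]
  rw [integral_const_mul, h]
  rw [inv_mul_cancel₀]
  positivity

lemma stdNormalCDF_eq (x : ℝ) : stdNormalCDF x = ∫ t in Set.Iic x, gauss t := rfl

lemma stdNormalCDF_sub (a b : ℝ) :
    stdNormalCDF b - stdNormalCDF a = ∫ x in a..b, gauss x := by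
  rw [stdNormalCDF_eq, stdNormalCDF_eq]
  exact intervalIntegral.integral_Iic_sub_Iic gauss_integrable_s11.integrableOn
    gauss_integrable_s11.integrableOn

lemma hasDerivAt_stdNormalCDF_s11 (x : ℝ) : HasDerivAt stdNormalCDF (gauss x) x := by
  have h : stdNormalCDF = fun y => stdNormalCDF 0 + ∫ t in (0:ℝ)..y, gauss t := by
    funext y
    rw [← stdNormalCDF_sub]; ring
  rw [h]
  exact (intervalIntegral.integral_hasDerivAt_right
    gauss_integrable_s11.intervalIntegrable
    (gauss_cont.stronglyMeasurable.stronglyMeasurableAtFilter)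
    gauss_cont.continuousAt).const_add _

lemma continuous_stdNormalCDF : Continuous stdNormalCDF :=
  continuous_iff_continuousAt.2 fun x => (hasDerivAt_stdNormalCDF_s11 x).continuousAt

lemma stdNormalCDF_neg (x : ℝ) : stdNormalCDF (-x) = 1 - stdNormalCDF x := by
  have h1 : stdNormalCDF (-x) = ∫ t in Set.Ioi x, gauss t := by
    rw [stdNormalCDF_eq]
    have : ∀ t : ℝ, gauss t = gauss (-t) := by
      intro t; unfold gauss; rw [neg_sq]
    calc ∫ t in Set.Iic (-x), gauss t = ∫ t in Set.Iic (-x), gauss (-t) := by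
          simp_rw [← this]
      _ = ∫ t in Set.Ioi x, gauss t := by rw [integral_comp_neg_Iic, neg_neg]
  have h2 : stdNormalCDF x + ∫ t in Set.Ioi x, gauss t = 1 := by
    rw [stdNormalCDF_eq, intervalIntegral.integral_Iic_add_Ioi gauss_integrable_s11.integrableOn
      gauss_integrable_s11.integrableOn, gauss_integral]
  rw [h1]; linarith

lemma stdNormalCDF_zero : stdNormalCDF 0 = 1/2 := by
  have := stdNormalCDF_neg 0
  rw [neg_zero] at this; linarith

lemma tendsto_stdNormalCDF_atTop : Tendsto stdNormalCDF atTop (𝓝 1) := by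
  have h1 : Tendsto (fun b => ∫ t in (0:ℝ)..b, gauss t) atTop
      (𝓝 (∫ t in Set.Ioi (0:ℝ), gauss t)) :=
    intervalIntegral_tendsto_integral_Ioi 0 gauss_integrable_s11.integrableOn tendsto_id
  have h2 : (∫ t in Set.Ioi (0:ℝ), gauss t) = 1/2 := by
    have := stdNormalCDF_neg 0
    have h3 : stdNormalCDF 0 + ∫ t in Set.Ioi (0:ℝ), gauss t = 1 := by
      rw [stdNormalCDF_eq, intervalIntegral.integral_Iic_add_Ioi gauss_integrable_s11.integrableOn
        gauss_integrable_s11.integrableOn, gauss_integral]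
    rw [stdNormalCDF_zero] at h3; linarith
  have h4 : stdNormalCDF = fun b => stdNormalCDF 0 + ∫ t in (0:ℝ)..b, gauss t := by
    funext b; rw [← stdNormalCDF_sub]; ring
  rw [h4, show (1:ℝ) = 1/2 + 1/2 by norm_num]
  rw [h2] at h1
  have h5 := (tendsto_const_nhds (x := stdNormalCDF 0) (f := atTop (α := ℝ))).add h1
  rw [stdNormalCDF_zero] at h5 ⊢
  exact h5

lemma normalPdf_nonneg (m s2 x : ℝ) : 0 ≤ normalPdf m s2 x := by
  unfold normalPdf; positivity

lemma sqrt_two_pi_mul (s : ℝ) (hs : 0 ≤ s) :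
    Real.sqrt (2 * Real.pi * s ^ 2) = Real.sqrt (2 * Real.pi) * s := by
  rw [Real.sqrt_mul (by positivity), Real.sqrt_sq hs]

lemma hasDerivAt_normalCDF (m σ : ℝ) (hσ : 0 < σ) (s : ℝ) :
    HasDerivAt (fun s => stdNormalCDF ((s - m) / σ)) (normalPdf m (σ ^ 2) s) s := by
  have hinner : HasDerivAt (fun s : ℝ => (s - m) / σ) (1 / σ) s := by
    have := ((hasDerivAt_id s).sub_const m).div_const σ
    simpa using this
  have h := (hasDerivAt_stdNormalCDF_s11 ((s - m) / σ)).comp s hinner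
  refine h.congr_deriv ?_
  symm
  unfold normalPdf gauss
  rw [sqrt_two_pi_mul σ hσ.le]
  have he : -(s - m) ^ 2 / (2 * σ ^ 2) = -((s - m) / σ) ^ 2 / 2 := by
    ring
  rw [he, mul_inv]
  have hσ' : σ ≠ 0 := hσ.ne'
  field_simp

lemma tendsto_normalCDF_atTop (m σ : ℝ) (hσ : 0 < σ) :
    Tendsto (fun s => stdNormalCDF ((s - m) / σ)) atTop (𝓝 1) := by
  apply tendsto_stdNormalCDF_atTop.comp
  apply Tendsto.atTop_div_const hσ
  exact tendsto_atTop_add_const_right _ _ tendsto_id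

lemma key_deriv (a : ℝ) (ha : 0 < a) {x : ℝ} (hx : 0 ≤ x) :
    HasDerivAt (fun x => -2 * stdNormalCDF (a / Real.sqrt (1 + x)))
      ((1 + x)⁻¹ * normalPdf (1 + x) ((1 + x) / a ^ 2) x) x := by
  have hy : (0:ℝ) < 1 + x := by linarith
  have hs : 0 < Real.sqrt (1 + x) := Real.sqrt_pos.2 hy
  have hsq : HasDerivAt (fun x : ℝ => Real.sqrt (1 + x)) (1 / (2 * Real.sqrt (1 + x))) x := by
    have h0 : HasDerivAt (fun x : ℝ => 1 + x) 1 x := (hasDerivAt_id x).const_add 1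
    have := (Real.hasDerivAt_sqrt hy.ne').comp x h0
    simp at this ⊢; exact this
  have hdiv : HasDerivAt (fun x : ℝ => a / Real.sqrt (1 + x))
      ((0 * Real.sqrt (1+x) - a * (1 / (2 * Real.sqrt (1 + x)))) / (Real.sqrt (1+x))^2) x :=
    (hasDerivAt_const x a).div hsq hs.ne'
  have h := ((hasDerivAt_stdNormalCDF_s11 (a / Real.sqrt (1 + x))).comp x hdiv).const_mul (-2)
  refine h.congr_deriv ?_
  symm
  unfold normalPdf gauss
  have hsqrt1 : Real.sqrt (2 * Real.pi * ((1 + x) / a ^ 2))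
      = Real.sqrt (2 * Real.pi) * Real.sqrt (1 + x) / a := by
    rw [Real.sqrt_mul (by positivity), Real.sqrt_div hy.le, Real.sqrt_sq ha.le, mul_div_assoc]
  have hx1 : (x - (1 + x)) ^ 2 = 1 := by ring
  have hexp : -(x - (1 + x)) ^ 2 / (2 * ((1 + x) / a ^ 2))
      = -(a / Real.sqrt (1 + x)) ^ 2 / 2 := by
    rw [hx1, div_pow, Real.sq_sqrt hy.le]
    field_simp
  rw [hsqrt1, hexp, Real.sq_sqrt hy.le]
  have h2π : Real.sqrt (2 * Real.pi) ≠ 0 := by positivity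
  field_simp
  ring

lemma sqrt_tendsto_atTop : Tendsto Real.sqrt atTop atTop := by
  apply tendsto_atTop_atTop.2
  intro b
  refine ⟨b ^ 2, fun x hx => ?_⟩
  calc b ≤ |b| := le_abs_self b
    _ = Real.sqrt (b ^ 2) := (Real.sqrt_sq_eq_abs b).symm
    _ ≤ Real.sqrt x := Real.sqrt_le_sqrt hx

lemma critical_t (a : ℝ) (ha : 0 < a) {X : ℝ} (hX : 0 ≤ X) :
    ∫ x in (0:ℝ)..X, (1 + x)⁻¹ * normalPdf (1 + x) ((1 + x) / a ^ 2) x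
      = 2 * (stdNormalCDF a - stdNormalCDF (a / Real.sqrt (1 + X))) := by
  have hderiv : ∀ x ∈ Set.Ici (0:ℝ),
      HasDerivAt (fun x => -2 * stdNormalCDF (a / Real.sqrt (1 + x)))
        ((1 + x)⁻¹ * normalPdf (1 + x) ((1 + x) / a ^ 2) x) x :=
    fun x hx => key_deriv a ha hx
  have hpos : ∀ x ∈ Set.Ioi (0:ℝ),
      0 ≤ (1 + x)⁻¹ * normalPdf (1 + x) ((1 + x) / a ^ 2) x := fun x hx =>
    mul_nonneg (inv_nonneg.2 (by have := hx.out; linarith)) (normalPdf_nonneg _ _ _)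
  have htend : Tendsto (fun x => -2 * stdNormalCDF (a / Real.sqrt (1 + x))) atTop
      (𝓝 (-1)) := by
    have h1 : Tendsto (fun x : ℝ => a / Real.sqrt (1 + x)) atTop (𝓝 0) :=
      Tendsto.div_atTop tendsto_const_nhds
        (sqrt_tendsto_atTop.comp (tendsto_atTop_add_const_left _ _ tendsto_id))
    have h2 := ((continuous_stdNormalCDF.tendsto 0).comp h1).const_mul (-2)
    rw [stdNormalCDF_zero] at h2
    rw [show (-2:ℝ) * (1/2) = -1 by norm_num] at h2
    exact h2
  have hint : IntegrableOn (fun x => (1 + x)⁻¹ * normalPdf (1 + x) ((1 + x) / a ^ 2) x)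
      (Set.Ioi 0) :=
    integrableOn_Ioi_deriv_of_nonneg' hderiv hpos htend
  rw [intervalIntegral.integral_eq_sub_of_hasDerivAt
    (fun x hx => hderiv x (by rw [Set.uIcc_of_le hX] at hx; exact hx.1))
    ((intervalIntegrable_iff_integrableOn_Ioc_of_le hX).2
      (hint.mono_set Set.Ioc_subset_Ioi_self))]
  have h10 : (1:ℝ) + 0 = 1 := by norm_num
  rw [h10, Real.sqrt_one, div_one]
  ring

lemma critical_inf (a : ℝ) (ha : 0 < a) :
    ∫ x in Set.Ioi (0:ℝ), (1 + x)⁻¹ * normalPdf (1 + x) ((1 + x) / a ^ 2) x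
      = 2 * stdNormalCDF a - 1 := by
  have hderiv : ∀ x ∈ Set.Ici (0:ℝ),
      HasDerivAt (fun x => -2 * stdNormalCDF (a / Real.sqrt (1 + x)))
        ((1 + x)⁻¹ * normalPdf (1 + x) ((1 + x) / a ^ 2) x) x :=
    fun x hx => key_deriv a ha hx
  have hpos : ∀ x ∈ Set.Ioi (0:ℝ),
      0 ≤ (1 + x)⁻¹ * normalPdf (1 + x) ((1 + x) / a ^ 2) x := fun x hx =>
    mul_nonneg (inv_nonneg.2 (by have := hx.out; linarith)) (normalPdf_nonneg _ _ _)
  have htend : Tendsto (fun x => -2 * stdNormalCDF (a / Real.sqrt (1 + x))) atTop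
      (𝓝 (-1)) := by
    have h1 : Tendsto (fun x : ℝ => a / Real.sqrt (1 + x)) atTop (𝓝 0) :=
      Tendsto.div_atTop tendsto_const_nhds
        (sqrt_tendsto_atTop.comp (tendsto_atTop_add_const_left _ _ tendsto_id))
    have h2 := ((continuous_stdNormalCDF.tendsto 0).comp h1).const_mul (-2)
    rw [stdNormalCDF_zero] at h2
    rw [show (-2:ℝ) * (1/2) = -1 by norm_num] at h2
    exact h2
  rw [integral_Ioi_of_hasDerivAt_of_nonneg' hderiv hpos htend]
  have h10 : (1:ℝ) + 0 = 1 := by norm_num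
  rw [h10, Real.sqrt_one, div_one]
  ring

noncomputable def gfun (u M D c s : ℝ) : ℝ :=
  (Real.sqrt (2 * Real.pi))⁻¹ / (D * Real.sqrt u)
    * (Real.sqrt (1 + c / u * s) * (1 + c / u * s))⁻¹
    * Real.exp (-((1 - c * M) * s - u * M) ^ 2 / (2 * D ^ 2 * (u + c * s)))

lemma gfun_eq {u M D c s : ℝ} (hu : 0 < u) (hD : 0 < D) (hc : 0 < c) (hs : 0 ≤ s) :
    c / u * ((1 + c / u * s)⁻¹
        * normalPdf (c * M * (1 + c / u * s)) (c ^ 2 * D ^ 2 * (1 + c / u * s) / u) (c / u * s))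
      = gfun u M D c s := by
  have hw : 0 < 1 + c / u * s := by positivity
  have hsw : 0 < Real.sqrt (1 + c / u * s) := Real.sqrt_pos.2 hw
  have hsu : 0 < Real.sqrt u := Real.sqrt_pos.2 hu
  have h2π : (0:ℝ) < Real.sqrt (2 * Real.pi) := by positivity
  unfold normalPdf gfun
  have hsd : Real.sqrt (2 * Real.pi * (c ^ 2 * D ^ 2 * (1 + c / u * s) / u))
      = Real.sqrt (2 * Real.pi) * Real.sqrt (1 + c / u * s) * (c * D) / Real.sqrt u := by
    rw [show 2 * Real.pi * (c ^ 2 * D ^ 2 * (1 + c / u * s) / u)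
        = 2 * Real.pi * (1 + c / u * s) * ((c * D) ^ 2 / u) by ring,
      Real.sqrt_mul (by positivity), Real.sqrt_mul (by positivity),
      Real.sqrt_div (sq_nonneg _), Real.sqrt_sq (by positivity)]
    ring
  have hexp : -(c / u * s - c * M * (1 + c / u * s)) ^ 2
        / (2 * (c ^ 2 * D ^ 2 * (1 + c / u * s) / u))
      = -((1 - c * M) * s - u * M) ^ 2 / (2 * D ^ 2 * (u + c * s)) := by
    have h1 : c / u * s - c * M * (1 + c / u * s) = c / u * ((1 - c * M) * s - u * M) := by
      field_simp; ring
    rw [h1, mul_pow, div_pow]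
    rw [div_eq_div_iff (by positivity) (by positivity)]
    field_simp
  rw [hsd, hexp]
  field_simp
  ring
  exact Real.sq_sqrt hu.le

lemma gfun_zero_eq (u M D : ℝ) (hu : 0 < u) (hD : 0 < D) (s : ℝ) :
    gfun u M D 0 s = normalPdf (u * M) ((D * Real.sqrt u) ^ 2) s := by
  have hsu : 0 < Real.sqrt u := Real.sqrt_pos.2 hu
  unfold gfun normalPdf
  rw [sqrt_two_pi_mul (D * Real.sqrt u) (by positivity)]
  rw [mul_pow, Real.sq_sqrt hu.le]
  norm_num
  ring_nf

lemma gfun_tendsto (u M D : ℝ) (hu : 0 < u) (hD : 0 < D) (s : ℝ) :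
    Tendsto (fun c => gfun u M D c s) (nhdsWithin 0 (Set.Ioi 0)) (𝓝 (gfun u M D 0 s)) := by
  have h : ContinuousAt (fun c => gfun u M D c s) 0 := by
    unfold gfun
    apply ContinuousAt.mul
    apply ContinuousAt.mul continuousAt_const
    · apply ContinuousAt.inv₀
      · exact (Real.continuous_sqrt.continuousAt.comp (by fun_prop)).mul (by fun_prop)
      · norm_num
    · apply Real.continuous_exp.continuousAt.comp
      apply ContinuousAt.div (by fun_prop) (by fun_prop)
      show 2 * D ^ 2 * (u + 0 * s) ≠ 0
      rw [zero_mul, add_zero]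
      positivity
  exact h.continuousWithinAt.tendsto

lemma gfun_nonneg {u M D c s : ℝ} (hu : 0 < u) (hD : 0 < D) (hc : 0 ≤ c) (hs : 0 ≤ s) :
    0 ≤ gfun u M D c s := by
  have hw : 0 < 1 + c / u * s := by positivity
  unfold gfun
  positivity

lemma gfun_le_const {u M D c s : ℝ} (hu : 0 < u) (hD : 0 < D) (hc : 0 ≤ c) (hs : 0 ≤ s) :
    gfun u M D c s ≤ (Real.sqrt (2 * Real.pi))⁻¹ / (D * Real.sqrt u) := by
  have hw : (1:ℝ) ≤ 1 + c / u * s := by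
    have : 0 ≤ c / u * s := by positivity
    linarith
  have hw0 : (0:ℝ) < 1 + c / u * s := by linarith
  have h1 : (1:ℝ) ≤ Real.sqrt (1 + c / u * s) * (1 + c / u * s) := by
    have := Real.one_le_sqrt.2 hw
    nlinarith
  have h2 : (Real.sqrt (1 + c / u * s) * (1 + c / u * s))⁻¹ ≤ 1 := by
    rw [inv_le_one_iff₀]; right; exact h1
  have h3 : Real.exp (-((1 - c * M) * s - u * M) ^ 2 / (2 * D ^ 2 * (u + c * s))) ≤ 1 := by
    rw [Real.exp_le_one_iff]
    apply div_nonpos_of_nonpos_of_nonneg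
    · simp [sq_nonneg]
    · positivity
  have hP : (0:ℝ) ≤ (Real.sqrt (2 * Real.pi))⁻¹ / (D * Real.sqrt u) := by positivity
  unfold gfun
  calc (Real.sqrt (2 * Real.pi))⁻¹ / (D * Real.sqrt u)
        * (Real.sqrt (1 + c / u * s) * (1 + c / u * s))⁻¹
        * Real.exp (-((1 - c * M) * s - u * M) ^ 2 / (2 * D ^ 2 * (u + c * s)))
      ≤ (Real.sqrt (2 * Real.pi))⁻¹ / (D * Real.sqrt u) * 1 * 1 := by
        apply mul_le_mul
        · exact mul_le_mul_of_nonneg_left h2 hP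
        · exact h3
        · positivity
        · positivity
    _ = (Real.sqrt (2 * Real.pi))⁻¹ / (D * Real.sqrt u) := by ring

lemma gfun_measurable (u M D c : ℝ) : Measurable (gfun u M D c) := by
  unfold gfun
  apply Measurable.mul
  apply Measurable.mul measurable_const
  · exact ((Real.continuous_sqrt.measurable.comp (by fun_prop)).mul (by fun_prop)).inv
  · have hnum : Measurable (fun s => -((1 - c * M) * s - u * M) ^ 2) := by fun_prop
    have hden : Measurable (fun s => 2 * D ^ 2 * (u + c * s)) := by fun_prop
    exact Real.continuous_exp.measurable.comp (hnum.div hden)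

set_option maxHeartbeats 1000000 in
lemma gfun_le_exp {u M D c s : ℝ} (hu : 0 < u) (hM : 0 < M) (hD : 0 < D)
    (hc : 0 < c) (hcM : c * M ≤ 1/2) (hc1 : c ≤ 1) (hs : 0 < s) :
    gfun u M D c s ≤ (Real.sqrt (2 * Real.pi))⁻¹ / (D * Real.sqrt u)
      * Real.exp ((2 * u * M + u / 8) ^ 2 / (D ^ 2 * u)) * Real.exp (-(1 / (16 * D ^ 2)) * s) := by
  have hw : (1:ℝ) ≤ 1 + c / u * s := by
    have : 0 ≤ c / u * s := by positivity
    linarith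
  have hW : (Real.sqrt (1 + c / u * s) * (1 + c / u * s))⁻¹ ≤ 1 := by
    rw [inv_le_one_iff₀]; right
    have := Real.one_le_sqrt.2 hw
    nlinarith
  have hWpos : 0 < Real.sqrt (1 + c / u * s) * (1 + c / u * s) := by
    have h0 : (0:ℝ) < 1 + c / u * s := by linarith
    have := Real.sqrt_pos.2 h0
    positivity
  have hP : (0:ℝ) ≤ (Real.sqrt (2 * Real.pi))⁻¹ / (D * Real.sqrt u) := by positivity
  -- key exponent inequality
  have key : (1 / (16 * D ^ 2)) * s - (2 * u * M + u / 8) ^ 2 / (D ^ 2 * u)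
      ≤ ((1 - c * M) * s - u * M) ^ 2 / (2 * D ^ 2 * (u + c * s)) := by
    have hd : (0:ℝ) < 2 * D ^ 2 * (u + c * s) := by positivity
    rw [le_div_iff₀ hd]
    have h1 : (1 / (16 * D ^ 2)) * s * (2 * D ^ 2 * (u + c * s)) = s * (u + c * s) / 8 := by
      field_simp; ring
    have h2 : (2 * u * M + u / 8) ^ 2 / (D ^ 2 * u) * (2 * D ^ 2 * (u + c * s))
        = 2 * (2 * u * M + u / 8) ^ 2 * (u + c * s) / u := by
      field_simp
    have h3 : 2 * (2 * u * M + u / 8) ^ 2 ≤ 2 * (2 * u * M + u / 8) ^ 2 * (u + c * s) / u := by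
      rw [le_div_iff₀ hu]
      nlinarith [sq_nonneg (2 * u * M + u / 8), mul_pos hc hs]
    have he1 : 1 / 2 ≤ 1 - c * M := by linarith
    have he2 : 1 - c * M ≤ 1 := by nlinarith [mul_pos hc hM]
    have he3 : 1 / 4 ≤ (1 - c * M) ^ 2 := by nlinarith [mul_self_nonneg (1 - c * M - 1 / 2)]
    have hN : s ^ 2 / 4 - 2 * u * M * s ≤ ((1 - c * M) * s - u * M) ^ 2 := by
      have ha1 : s ^ 2 / 4 ≤ (1 - c * M) ^ 2 * s ^ 2 := by
        have := mul_le_mul_of_nonneg_right he3 (sq_nonneg s)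
        linarith
      have ha2 : (1 - c * M) * (2 * u * M * s) ≤ 2 * u * M * s := by
        have h2u : 0 ≤ 2 * u * M * s := by positivity
        nlinarith
      have expand : ((1 - c * M) * s - u * M) ^ 2
          = (1 - c * M) ^ 2 * s ^ 2 - (1 - c * M) * (2 * u * M * s) + (u * M) ^ 2 := by ring
      rw [expand]
      have := sq_nonneg (u * M)
      linarith
    have hcs : c * s ^ 2 ≤ s ^ 2 := by nlinarith [sq_nonneg s]
    calc ((1 / (16 * D ^ 2)) * s - (2 * u * M + u / 8) ^ 2 / (D ^ 2 * u))
          * (2 * D ^ 2 * (u + c * s))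
        = s * (u + c * s) / 8 - (2 * u * M + u / 8) ^ 2 / (D ^ 2 * u)
            * (2 * D ^ 2 * (u + c * s)) := by rw [← h1]; ring
      _ ≤ s * (u + c * s) / 8 - 2 * (2 * u * M + u / 8) ^ 2 := by
          rw [h2]; linarith
      _ ≤ ((1 - c * M) * s - u * M) ^ 2 := by
          nlinarith [sq_nonneg (s - 4 * (2 * u * M + u / 8))]
  have hE : Real.exp (-((1 - c * M) * s - u * M) ^ 2 / (2 * D ^ 2 * (u + c * s)))
      ≤ Real.exp ((2 * u * M + u / 8) ^ 2 / (D ^ 2 * u)) * Real.exp (-(1 / (16 * D ^ 2)) * s) := by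
    rw [← Real.exp_add, Real.exp_le_exp]
    have hd : (0:ℝ) < 2 * D ^ 2 * (u + c * s) := by positivity
    rw [neg_div]
    linarith
  unfold gfun
  calc (Real.sqrt (2 * Real.pi))⁻¹ / (D * Real.sqrt u)
        * (Real.sqrt (1 + c / u * s) * (1 + c / u * s))⁻¹
        * Real.exp (-((1 - c * M) * s - u * M) ^ 2 / (2 * D ^ 2 * (u + c * s)))
      ≤ (Real.sqrt (2 * Real.pi))⁻¹ / (D * Real.sqrt u) * 1
        * (Real.exp ((2 * u * M + u / 8) ^ 2 / (D ^ 2 * u))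
            * Real.exp (-(1 / (16 * D ^ 2)) * s)) := by
        apply mul_le_mul
        · exact mul_le_mul_of_nonneg_left hW hP
        · exact hE
        · positivity
        · positivity
    _ = (Real.sqrt (2 * Real.pi))⁻¹ / (D * Real.sqrt u)
        * Real.exp ((2 * u * M + u / 8) ^ 2 / (D ^ 2 * u))
        * Real.exp (-(1 / (16 * D ^ 2)) * s) := by ring

lemma normalPdf_continuous (m s2 : ℝ) (hs2 : 0 < s2) : Continuous (normalPdf m s2) := by
  unfold normalPdf
  apply continuous_const.mul
  apply Real.continuous_exp.comp
  exact (continuous_pow 2 |>.comp (continuous_id.sub continuous_const)).neg.div_const _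

lemma normal_interval_integral (m σ t : ℝ) (hσ : 0 < σ) :
    ∫ s in (0:ℝ)..t, normalPdf m (σ ^ 2) s
      = stdNormalCDF ((t - m) / σ) - stdNormalCDF ((0 - m) / σ) := by
  apply intervalIntegral.integral_eq_sub_of_hasDerivAt
  · exact fun s _ => hasDerivAt_normalCDF m σ hσ s
  · exact (normalPdf_continuous m (σ ^ 2) (by positivity)).intervalIntegrable _ _

lemma normal_Ioi_integral (m σ : ℝ) (hσ : 0 < σ) :
    ∫ s in Set.Ioi (0:ℝ), normalPdf m (σ ^ 2) s = 1 - stdNormalCDF ((0 - m) / σ) :=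
  integral_Ioi_of_hasDerivAt_of_nonneg'
    (fun s _ => hasDerivAt_normalCDF m σ hσ s)
    (fun s _ => normalPdf_nonneg _ _ _)
    (tendsto_normalCDF_atTop m σ hσ)

lemma zero_sub_div (u M D : ℝ) (hu : 0 < u) (hD : 0 < D) :
    (0 - M * u) / (D * Real.sqrt u) = -(M / D) * Real.sqrt u := by
  have hsu : (0:ℝ) < Real.sqrt u := Real.sqrt_pos.2 hu
  rw [zero_sub, neg_div, neg_mul, neg_inj]
  rw [div_eq_iff (by positivity)]
  have h := Real.mul_self_sqrt hu.le
  field_simp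
  linear_combination (-M) * h

lemma part3 (u M D t : ℝ) (hu : 0 < u) (hM : 0 < M) (hD : 0 < D) (ht : 0 < t) :
    Tendsto (fun c => IMt u c 0 t M D) (nhdsWithin 0 (Set.Ioi 0))
      (𝓝 (stdNormalCDF ((t - M * u) / (D * Real.sqrt u))
        - stdNormalCDF (-(M / D) * Real.sqrt u))) := by
  have heq : ∀ᶠ c in nhdsWithin (0:ℝ) (Set.Ioi 0),
      (∫ s in (0:ℝ)..t, gfun u M D c s) = IMt u c 0 t M D := by
    filter_upwards [eventually_mem_nhdsWithin] with c hc
    have hc' : (0:ℝ) < c := hc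
    have hcu : c / u ≠ 0 := by positivity
    unfold IMt
    simp only [mul_zero, add_zero, sub_zero]
    calc ∫ s in (0:ℝ)..t, gfun u M D c s
        = ∫ s in (0:ℝ)..t, c / u * ((1 + c / u * s)⁻¹
            * normalPdf (c * M * (1 + c / u * s)) (c ^ 2 * D ^ 2 * (1 + c / u * s) / u)
              (c / u * s)) := by
          apply intervalIntegral.integral_congr
          intro s hs
          rw [Set.uIcc_of_le ht.le] at hs
          exact (gfun_eq hu hD hc' hs.1).symm
      _ = (c / u) • ∫ s in (0:ℝ)..t, (1 + c / u * s)⁻¹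
            * normalPdf (c * M * (1 + c / u * s)) (c ^ 2 * D ^ 2 * (1 + c / u * s) / u)
              (c / u * s) := by
          rw [← intervalIntegral.integral_smul]
          rfl
      _ = (c / u) • ((c / u)⁻¹ • ∫ x in (c / u * 0)..(c / u * t),
            (1 + x)⁻¹ * normalPdf (c * M * (1 + x)) (c ^ 2 * D ^ 2 * (1 + x) / u) x) := by
          rw [intervalIntegral.integral_comp_mul_left
            (fun x => (1 + x)⁻¹ * normalPdf (c * M * (1 + x)) (c ^ 2 * D ^ 2 * (1 + x) / u) x)
            hcu]
      _ = ∫ x in (0:ℝ)..(c * t / u),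
            (1 + x)⁻¹ * normalPdf (c * M * (1 + x)) (c ^ 2 * D ^ 2 * (1 + x) / u) x := by
          rw [smul_inv_smul₀ hcu]
          congr 1
          · ring
          · ring
  have h2 : Tendsto (fun c => ∫ s in (0:ℝ)..t, gfun u M D c s) (nhdsWithin 0 (Set.Ioi 0))
      (𝓝 (∫ s in (0:ℝ)..t, gfun u M D 0 s)) := by
    apply intervalIntegral.tendsto_integral_filter_of_dominated_convergence
      (fun _ => (Real.sqrt (2 * Real.pi))⁻¹ / (D * Real.sqrt u))
    · exact Filter.Eventually.of_forall fun c =>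
        (gfun_measurable u M D c).aestronglyMeasurable.restrict
    · filter_upwards [eventually_mem_nhdsWithin] with c hc
      refine Filter.Eventually.of_forall fun s hs => ?_
      rw [Set.uIoc_of_le ht.le] at hs
      have hc' : (0:ℝ) < c := hc
      rw [Real.norm_eq_abs, abs_of_nonneg (gfun_nonneg hu hD hc'.le hs.1.le)]
      exact gfun_le_const hu hD hc'.le hs.1.le
    · exact intervalIntegrable_const
    · exact Filter.Eventually.of_forall fun s _ => gfun_tendsto u M D hu hD s
  have h3 : ∫ s in (0:ℝ)..t, gfun u M D 0 s
      = stdNormalCDF ((t - M * u) / (D * Real.sqrt u))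
        - stdNormalCDF (-(M / D) * Real.sqrt u) := by
    rw [intervalIntegral.integral_congr
      (g := fun s => normalPdf (u * M) ((D * Real.sqrt u) ^ 2) s)
      (fun s _ => gfun_zero_eq u M D hu hD s)]
    rw [normal_interval_integral (u * M) (D * Real.sqrt u) t (by positivity)]
    rw [show t - u * M = t - M * u by ring, show (0:ℝ) - u * M = 0 - M * u by ring,
      zero_sub_div u M D hu hD]
  rw [← h3]
  exact h2.congr' heq

lemma part4 (u M D : ℝ) (hu : 0 < u) (hM : 0 < M) (hD : 0 < D) :
    Tendsto (fun c => IMinf u c 0 M D) (nhdsWithin 0 (Set.Ioi 0))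
      (𝓝 (stdNormalCDF ((M / D) * Real.sqrt u))) := by
  have hc₀ : (0:ℝ) < min (1 / (2 * M)) 1 := by positivity
  have hmem : Set.Ioo (0:ℝ) (min (1 / (2 * M)) 1) ∈ nhdsWithin (0:ℝ) (Set.Ioi 0) :=
    Ioo_mem_nhdsGT_of_mem ⟨le_refl 0, hc₀⟩
  have heq : ∀ᶠ c in nhdsWithin (0:ℝ) (Set.Ioi 0),
      (∫ s in Set.Ioi (0:ℝ), gfun u M D c s) = IMinf u c 0 M D := by
    filter_upwards [eventually_mem_nhdsWithin] with c hc
    have hc' : (0:ℝ) < c := hc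
    have hcu : c / u ≠ 0 := by positivity
    have hcu' : (0:ℝ) < c / u := by positivity
    unfold IMinf
    simp only [mul_zero, add_zero]
    have hcomp := MeasureTheory.integral_comp_mul_left_Ioi
      (fun x => (1 + x)⁻¹ * normalPdf (c * M * (1 + x)) (c ^ 2 * D ^ 2 * (1 + x) / u) x)
      0 hcu'
    rw [mul_zero] at hcomp
    calc ∫ s in Set.Ioi (0:ℝ), gfun u M D c s
        = ∫ s in Set.Ioi (0:ℝ), c / u * ((1 + c / u * s)⁻¹
            * normalPdf (c * M * (1 + c / u * s)) (c ^ 2 * D ^ 2 * (1 + c / u * s) / u)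
              (c / u * s)) := by
          apply setIntegral_congr_fun measurableSet_Ioi
          intro s hs
          exact (gfun_eq hu hD hc' (le_of_lt hs)).symm
      _ = (c / u) • ∫ s in Set.Ioi (0:ℝ), (1 + c / u * s)⁻¹
            * normalPdf (c * M * (1 + c / u * s)) (c ^ 2 * D ^ 2 * (1 + c / u * s) / u)
              (c / u * s) := by
          rw [← integral_smul]
          rfl
      _ = (c / u) • ((c / u)⁻¹ • ∫ x in Set.Ioi (0:ℝ),
            (1 + x)⁻¹ * normalPdf (c * M * (1 + x)) (c ^ 2 * D ^ 2 * (1 + x) / u) x) := by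
          rw [hcomp]
      _ = ∫ x in Set.Ioi (0:ℝ),
            (1 + x)⁻¹ * normalPdf (c * M * (1 + x)) (c ^ 2 * D ^ 2 * (1 + x) / u) x := by
          rw [smul_inv_smul₀ hcu]
  have h2 : Tendsto (fun c => ∫ s in Set.Ioi (0:ℝ), gfun u M D c s)
      (nhdsWithin 0 (Set.Ioi 0)) (𝓝 (∫ s in Set.Ioi (0:ℝ), gfun u M D 0 s)) := by
    apply MeasureTheory.tendsto_integral_filter_of_dominated_convergence
      (fun s => (Real.sqrt (2 * Real.pi))⁻¹ / (D * Real.sqrt u)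
        * Real.exp ((2 * u * M + u / 8) ^ 2 / (D ^ 2 * u)) * Real.exp (-(1 / (16 * D ^ 2)) * s))
    · exact Filter.Eventually.of_forall fun c =>
        (gfun_measurable u M D c).aestronglyMeasurable.restrict
    · filter_upwards [hmem] with c hc
      rw [ae_restrict_iff' measurableSet_Ioi]
      refine Filter.Eventually.of_forall fun s hs => ?_
      have hc1 : (0:ℝ) < c := hc.1
      have hcM : c * M ≤ 1 / 2 := by
        have h := hc.2.le
        have h' : c ≤ 1 / (2 * M) := le_trans h (min_le_left _ _)
        rw [le_div_iff₀ (by positivity)] at h'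
        linarith
      have hcle1 : c ≤ 1 := le_trans hc.2.le (min_le_right _ _)
      rw [Real.norm_eq_abs, abs_of_nonneg (gfun_nonneg hu hD hc1.le (le_of_lt hs))]
      exact gfun_le_exp hu hM hD hc1 hcM hcle1 hs
    · apply Integrable.const_mul
      exact exp_neg_integrableOn_Ioi 0 (by positivity : (0:ℝ) < 1 / (16 * D ^ 2))
    · refine (ae_restrict_iff' measurableSet_Ioi).2 ?_
      exact Filter.Eventually.of_forall fun s _ => gfun_tendsto u M D hu hD s
  have h3 : ∫ s in Set.Ioi (0:ℝ), gfun u M D 0 s = stdNormalCDF ((M / D) * Real.sqrt u) := by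
    rw [setIntegral_congr_fun measurableSet_Ioi
      (fun s _ => gfun_zero_eq u M D hu hD s)]
    rw [normal_Ioi_integral (u * M) (D * Real.sqrt u) (by positivity)]
    rw [show (0:ℝ) - u * M = 0 - M * u by ring, zero_sub_div u M D hu hD]
    rw [neg_mul, stdNormalCDF_neg]
    ring
  rw [← h3]
  exact h2.congr' heq

lemma hfun_eq (u v M D : ℝ) (hu : 0 < u) (hv : 0 ≤ v) (hM : 0 < M) (hD : 0 < D) :
    (fun x : ℝ => (1 + x)⁻¹ * normalPdf (1 / M * M * (1 + x))
        ((1 / M) ^ 2 * D ^ 2 * (1 + x) / (u + 1 / M * v)) x)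
      = fun x => (1 + x)⁻¹ * normalPdf (1 + x)
          ((1 + x) / (Real.sqrt (u + 1 / M * v) / (1 / M * D)) ^ 2) x := by
  have hM' : (0:ℝ) < 1 / M := by positivity
  have hA : (0:ℝ) < u + 1 / M * v := by positivity
  have ha2 : (Real.sqrt (u + 1 / M * v) / (1 / M * D)) ^ 2
      = (u + 1 / M * v) / (1 / M * D) ^ 2 := by
    rw [div_pow, Real.sq_sqrt hA.le]
  funext x
  have hm : 1 / M * M * (1 + x) = 1 + x := by
    field_simp
  have hs2 : (1 / M) ^ 2 * D ^ 2 * (1 + x) / (u + 1 / M * v)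
      = (1 + x) / (Real.sqrt (u + 1 / M * v) / (1 / M * D)) ^ 2 := by
    rw [ha2]
    field_simp
  rw [hm, hs2]

lemma part1 (u v t M D : ℝ) (hu : 0 < u) (hv : 0 ≤ v) (ht : v < t) (hM : 0 < M) (hD : 0 < D) :
    IMt u (1 / M) v t M D
      = 2 * (stdNormalCDF (Real.sqrt (u + 1 / M * v) / (1 / M * D))
          - stdNormalCDF (Real.sqrt (u + 1 / M * v)
              / (1 / M * D * Real.sqrt (1 / M * (t - v) / (u + 1 / M * v) + 1)))) := by
  have hM' : (0:ℝ) < 1 / M := by positivity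
  have hA : (0:ℝ) < u + 1 / M * v := by positivity
  have ha : (0:ℝ) < Real.sqrt (u + 1 / M * v) / (1 / M * D) :=
    div_pos (Real.sqrt_pos.2 hA) (by positivity)
  have hX : 0 ≤ 1 / M * (t - v) / (u + 1 / M * v) := by
    apply div_nonneg _ hA.le
    have : 0 ≤ t - v := by linarith
    positivity
  unfold IMt
  rw [hfun_eq u v M D hu hv hM hD,
    critical_t (Real.sqrt (u + 1 / M * v) / (1 / M * D)) ha hX]
  congr 3
  rw [add_comm (1:ℝ) (1 / M * (t - v) / (u + 1 / M * v)), div_div]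

lemma part2 (u v M D : ℝ) (hu : 0 < u) (hv : 0 ≤ v) (hM : 0 < M) (hD : 0 < D) :
    IMinf u (1 / M) v M D
      = 2 * stdNormalCDF (Real.sqrt (u + 1 / M * v) / (1 / M * D)) - 1 := by
  have hM' : (0:ℝ) < 1 / M := by positivity
  have hA : (0:ℝ) < u + 1 / M * v := by positivity
  have ha : (0:ℝ) < Real.sqrt (u + 1 / M * v) / (1 / M * D) :=
    div_pos (Real.sqrt_pos.2 hA) (by positivity)
  unfold IMinf
  rw [hfun_eq u v M D hu hv hM hD,
    critical_inf (Real.sqrt (u + 1 / M * v) / (1 / M * D)) ha]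


/-- Values of `I_M` at the critical point `c = c* = 1/M` and in the limit `c → 0⁺`. -/
theorem IM_critical_and_zero_limit (u v t M D : ℝ)
    (hu : 0 < u) (hv : 0 ≤ v) (ht : v < t) (hM : 0 < M) (hD : 0 < D) :
    (IMt u (1 / M) v t M D
        = 2 * (stdNormalCDF (Real.sqrt (u + (1 / M) * v) / ((1 / M) * D))
            - stdNormalCDF (Real.sqrt (u + (1 / M) * v)
                / ((1 / M) * D *
                    Real.sqrt ((1 / M) * (t - v) / (u + (1 / M) * v) + 1)))))
    ∧ (IMinf u (1 / M) v M D
        = 2 * stdNormalCDF (Real.sqrt (u + (1 / M) * v) / ((1 / M) * D)) - 1)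
    ∧ Tendsto (fun c => IMt u c 0 t M D) (nhdsWithin 0 (Set.Ioi 0))
        (nhds (stdNormalCDF ((t - M * u) / (D * Real.sqrt u))
          - stdNormalCDF (-(M / D) * Real.sqrt u)))
    ∧ Tendsto (fun c => IMinf u c 0 M D) (nhdsWithin 0 (Set.Ioi 0))
        (nhds (stdNormalCDF ((M / D) * Real.sqrt u))) := by
  have ht0 : 0 < t := lt_of_le_of_lt hv ht
  exact ⟨part1 u v t M D hu hv ht hM hD, part2 u v M D hu hv hM hD,
    part3 u M D t hu hM hD ht0, part4 u M D hu hM hD⟩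
end

section
/- Let 0 < A < B, q > 0 and r > 0 with √r ≤ A. Then ∫_A^B y^{−2} exp(−q(y² + r²y^{−2})) dy = 2e^{2qr} ∫_{A + r/A}^{B + r/B} e^{−qu²} (u + √(u² − 4r))^{−2} du + 2e^{−2qr} ∫_{A − r/A}^{B − r/B} e^{−qx²} (√(x² + 4r) + x)^{−2} dx. (Binet's integral identity, obtained from the substitutions u = y + r/y and x = y − r/y.) -/
open MeasureTheory Real

/-- Binet's integral identity: for `0 < A < B`, `q > 0`, `r > 0` with `√r ≤ A`,
`∫_A^B y⁻² e^{−q(y² + r²/y²)} dy` splits, via the substitutions `u = y + r/y` and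
`x = y − r/y`, into the two integrals on the right-hand side. -/
theorem binet_integral (A B q r : ℝ)
    (hA : 0 < A) (hAB : A < B) (hq : 0 < q) (hr : 0 < r) (hrA : Real.sqrt r ≤ A) :
    (∫ y in A..B, (y ^ 2)⁻¹ * Real.exp (-q * (y ^ 2 + r ^ 2 / y ^ 2)))
      = 2 * Real.exp (2 * q * r) *
          (∫ u in (A + r / A)..(B + r / B),
            Real.exp (-q * u ^ 2) * ((u + Real.sqrt (u ^ 2 - 4 * r)) ^ 2)⁻¹)
        + 2 * Real.exp (-(2 * q * r)) *
          (∫ x in (A - r / A)..(B - r / B),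
            Real.exp (-q * x ^ 2) * ((Real.sqrt (x ^ 2 + 4 * r) + x) ^ 2)⁻¹) := by
  set φ₁ : ℝ → ℝ := fun y => y + r / y with hφ₁
  set φ₂ : ℝ → ℝ := fun y => y - r / y with hφ₂
  set g₁ : ℝ → ℝ := fun u => Real.exp (-q * u ^ 2) * ((u + Real.sqrt (u ^ 2 - 4 * r)) ^ 2)⁻¹
    with hg₁
  set g₂ : ℝ → ℝ := fun x => Real.exp (-q * x ^ 2) * ((Real.sqrt (x ^ 2 + 4 * r) + x) ^ 2)⁻¹
    with hg₂
  have hIcc : Set.uIcc A B = Set.Icc A B := Set.uIcc_of_le hAB.le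
  have hy0 : ∀ y ∈ Set.uIcc A B, 0 < y := by
    intro y hy
    rw [hIcc] at hy
    exact lt_of_lt_of_le hA hy.1
  have hyr : ∀ y ∈ Set.uIcc A B, r ≤ y ^ 2 := by
    intro y hy
    rw [hIcc] at hy
    have h1 : Real.sqrt r ≤ y := le_trans hrA hy.1
    calc r = (Real.sqrt r) ^ 2 := (Real.sq_sqrt hr.le).symm
      _ ≤ y ^ 2 := by nlinarith [Real.sqrt_nonneg r]
  -- derivative of r / y
  have hdinv : ∀ y : ℝ, y ≠ 0 → HasDerivAt (fun y : ℝ => r / y) (-(r / y ^ 2)) y := by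
    intro y hne
    have h := (hasDerivAt_inv hne).const_mul r
    have hf : (fun y : ℝ => r / y) = fun y => r * y⁻¹ := by
      ext z; rw [div_eq_mul_inv]
    rw [hf]
    exact h.congr_deriv (by ring)
  -- derivatives
  have hd1 : ∀ y ∈ Set.uIcc A B, HasDerivAt φ₁ (1 - r / y ^ 2) y := by
    intro y hy
    have := (hasDerivAt_id y).add (hdinv y (hy0 y hy).ne')
    exact this.congr_deriv (by ring)
    try ring
  have hd2 : ∀ y ∈ Set.uIcc A B, HasDerivAt φ₂ (1 + r / y ^ 2) y := by
    intro y hy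
    have := (hasDerivAt_id y).sub (hdinv y (hy0 y hy).ne')
    exact this.congr_deriv (by ring)
    try ring
  have hc0 : ContinuousOn (fun y : ℝ => r / y ^ 2) (Set.uIcc A B) := by
    apply ContinuousOn.div continuousOn_const (by fun_prop)
    intro y hy; exact pow_ne_zero 2 (hy0 y hy).ne'
  have hφ₁c : ContinuousOn φ₁ (Set.uIcc A B) := by
    apply ContinuousOn.add continuousOn_id
    exact ContinuousOn.div continuousOn_const continuousOn_id fun y hy => (hy0 y hy).ne'
  have hφ₂c : ContinuousOn φ₂ (Set.uIcc A B) := by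
    apply ContinuousOn.sub continuousOn_id
    exact ContinuousOn.div continuousOn_const continuousOn_id fun y hy => (hy0 y hy).ne'
  have hg₁c : ContinuousOn g₁ {u : ℝ | 0 < u} := by
    apply ContinuousOn.mul (by fun_prop)
    apply ContinuousOn.inv₀ (by fun_prop)
    intro u hu
    have h1 : 0 ≤ Real.sqrt (u ^ 2 - 4 * r) := Real.sqrt_nonneg _
    have h2 : (0:ℝ) < u := hu
    positivity
  have hmaps : ∀ y ∈ Set.uIcc A B, φ₁ y ∈ {u : ℝ | 0 < u} := by
    intro y hy
    have h0 := hy0 y hy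
    have : 0 < r / y := div_pos hr h0
    simp only [hφ₁, Set.mem_setOf_eq]
    positivity
  have hg₂c : Continuous g₂ := by
    apply Continuous.mul (by fun_prop)
    apply Continuous.inv₀ (by fun_prop)
    intro x
    have h1 : |x| < Real.sqrt (x ^ 2 + 4 * r) := by
      rw [← Real.sqrt_sq_eq_abs]
      apply Real.sqrt_lt_sqrt (sq_nonneg x); linarith
    have h2 := abs_lt.mp h1
    nlinarith [h2.1, h2.2]
  -- change of variables
  have hsub1 : (∫ y in A..B, (1 - r / y ^ 2) • (g₁ ∘ φ₁) y)
      = ∫ u in φ₁ A..φ₁ B, g₁ u := by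
    apply intervalIntegral.integral_comp_smul_deriv' hd1 (continuousOn_const.sub hc0)
    apply hg₁c.mono
    rintro u ⟨y, hy, rfl⟩
    exact hmaps y hy
  have hsub2 : (∫ y in A..B, (1 + r / y ^ 2) • (g₂ ∘ φ₂) y)
      = ∫ x in φ₂ A..φ₂ B, g₂ x :=
    intervalIntegral.integral_comp_smul_deriv hd2 (continuousOn_const.add hc0) hg₂c
  rw [← hsub1, ← hsub2, ← intervalIntegral.integral_const_mul,
    ← intervalIntegral.integral_const_mul, ← intervalIntegral.integral_add]
  · apply intervalIntegral.integral_congr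
    intro y hy
    have hy0' := hy0 y hy
    have hyr' := hyr y hy
    have hne : y ≠ 0 := hy0'.ne'
    have hsq1 : (φ₁ y) ^ 2 - 4 * r = (y - r / y) ^ 2 := by
      simp only [hφ₁]; field_simp; ring
    have hsq2 : (φ₂ y) ^ 2 + 4 * r = (y + r / y) ^ 2 := by
      simp only [hφ₂]; field_simp; ring
    have hry : r / y ≤ y := by
      rw [div_le_iff₀ hy0']; nlinarith
    have hs1 : Real.sqrt ((φ₁ y) ^ 2 - 4 * r) = y - r / y := by
      rw [hsq1, Real.sqrt_sq (by linarith)]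
    have hs2 : Real.sqrt ((φ₂ y) ^ 2 + 4 * r) = y + r / y := by
      have : 0 < r / y := div_pos hr hy0'
      rw [hsq2, Real.sqrt_sq (by linarith)]
    have hden1 : φ₁ y + Real.sqrt ((φ₁ y) ^ 2 - 4 * r) = 2 * y := by
      rw [hs1]; simp only [hφ₁]; ring
    have hden2 : Real.sqrt ((φ₂ y) ^ 2 + 4 * r) + φ₂ y = 2 * y := by
      rw [hs2]; simp only [hφ₂]; ring
    have hexp1 : Real.exp (2 * q * r) * Real.exp (-q * (φ₁ y) ^ 2)
        = Real.exp (-q * (y ^ 2 + r ^ 2 / y ^ 2)) := by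
      rw [← Real.exp_add]
      congr 1
      simp only [hφ₁]; field_simp; ring
    have hexp2 : Real.exp (-(2 * q * r)) * Real.exp (-q * (φ₂ y) ^ 2)
        = Real.exp (-q * (y ^ 2 + r ^ 2 / y ^ 2)) := by
      rw [← Real.exp_add]
      congr 1
      simp only [hφ₂]; field_simp; ring
    simp only [hg₁, hg₂, Function.comp_apply, smul_eq_mul, hden1, hden2]
    rw [show 2 * Real.exp (2 * q * r) * ((1 - r / y ^ 2) *
        (Real.exp (-q * φ₁ y ^ 2) * (((2 * y) ^ 2)⁻¹)))
        = (1 - r / y ^ 2) * (Real.exp (2 * q * r) * Real.exp (-q * φ₁ y ^ 2)) *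
          (2 * ((2 * y) ^ 2)⁻¹) by ring,
      show 2 * Real.exp (-(2 * q * r)) * ((1 + r / y ^ 2) *
        (Real.exp (-q * φ₂ y ^ 2) * (((2 * y) ^ 2)⁻¹)))
        = (1 + r / y ^ 2) * (Real.exp (-(2 * q * r)) * Real.exp (-q * φ₂ y ^ 2)) *
          (2 * ((2 * y) ^ 2)⁻¹) by ring,
      hexp1, hexp2]
    field_simp
    ring
  · apply ContinuousOn.intervalIntegrable
    exact continuousOn_const.mul ((continuousOn_const.sub hc0).smul
      (hg₁c.comp hφ₁c hmaps))
  · apply ContinuousOn.intervalIntegrable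
    exact continuousOn_const.mul ((continuousOn_const.add hc0).smul
      ((hg₂c.comp_continuousOn hφ₂c)))
end
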